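/- For every d ≥ 1 and every x ∈ R^d with x ∉ Z^d, there is a constant C(x) such that the spherical Dirichlet kernel D_N^d(x) = Σ_{k ∈ Z^d, |k| ≤ N} e^{2πi⟨k,x⟩} satisfies |D_N^d(x)| ≤ C(x) N^{d-1} for all N ≥ 1. -/

import Mathlib

open Real

lemma sq_le_iff_abs (c m : ℤ) (hc : 0 ≤ c) : m^2 ≤ c ↔ |m| ≤ (Nat.sqrt c.toNat : ℤ) := by
  have hsq : ((Nat.sqrt c.toNat : ℤ))^2 ≤ c := by
    have h2 : ((Nat.sqrt c.toNat ^ 2 : ℕ):ℤ) ≤ (c.toNat:ℤ) :=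
      Int.ofNat_le.mpr (Nat.sqrt_le' c.toNat)
    rw [Int.toNat_of_nonneg hc] at h2; push_cast at h2; nlinarith
  have hlt : c < ((Nat.sqrt c.toNat : ℤ) + 1)^2 := by
    have h2 : (c.toNat:ℤ) < (((Nat.sqrt c.toNat).succ ^ 2 : ℕ)) :=
      Int.ofNat_lt.mpr (Nat.lt_succ_sqrt' c.toNat)
    rw [Int.toNat_of_nonneg hc] at h2; push_cast at h2; nlinarith
  constructor
  · intro h; by_contra hab; push_neg at hab
    have h1 : (Nat.sqrt c.toNat : ℤ) + 1 ≤ |m| := Int.add_one_le_iff.mpr hab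
    nlinarith [sq_abs m, abs_nonneg m]
  · intro h; nlinarith [sq_abs m, abs_nonneg m]

lemma geom_bound (z : ℂ) (hz : ‖z‖ = 1) (hz1 : z ≠ 1) (a b : ℤ) :
    ‖∑ m ∈ Finset.Icc a b, z ^ m‖ ≤ 2 / ‖1 - z‖ := by
  have hz0 : z ≠ 0 := by rintro rfl; simp at hz
  have hz1' : z - 1 ≠ 0 := sub_ne_zero.mpr hz1
  have h1z : (0:ℝ) < ‖1 - z‖ := by
    rw [norm_pos_iff]; intro h; exact hz1 (sub_eq_zero.mp h).symm
  rcases lt_or_ge b a with h | h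
  · rw [Finset.Icc_eq_empty (by omega)]; simp; positivity
  · set n := (b + 1 - a).toNat with hn
    have key : ∑ m ∈ Finset.Icc a b, z ^ m = z ^ a * ∑ j ∈ Finset.range n, z ^ j := by
      rw [Finset.mul_sum]
      apply Finset.sum_nbij' (fun m => (m - a).toNat) (fun j => a + j)
      · intro m hm; simp only [Finset.mem_Icc] at hm; simp [Finset.mem_range]; omega
      · intro j hj; simp only [Finset.mem_range] at hj; simp [Finset.mem_Icc]; omega
      · intro m hm; simp only [Finset.mem_Icc] at hm; omega
      · intro j hj; simp only [Finset.mem_range] at hj; omega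
      · intro m hm; simp only [Finset.mem_Icc] at hm
        rw [← zpow_natCast z, ← zpow_add₀ hz0]
        congr 1; omega
    rw [key, geom_sum_eq hz1, norm_mul, norm_zpow, hz, one_zpow, one_mul, norm_div]
    rw [div_le_div_iff₀ (by rwa [norm_pos_iff]) h1z]
    calc ‖z^n - 1‖ * ‖1 - z‖ ≤ 2 * ‖1 - z‖ := by
          apply mul_le_mul_of_nonneg_right _ (norm_nonneg _)
          calc ‖z^n - 1‖ ≤ ‖z^n‖ + ‖(1:ℂ)‖ := norm_sub_le _ _
          _ = 2 := by rw [norm_pow, hz]; norm_num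
      _ = 2 * ‖z - 1‖ := by rw [norm_sub_rev]

/-- The spherical Dirichlet kernel `D_N^d(x) = ∑_{k ∈ ℤ^d, |k| ≤ N} e^{2πi⟨k,x⟩}`. -/
noncomputable def sphericalDirichlet (d : ℕ) (N : ℕ) (x : Fin d → ℝ) : ℂ :=
  ∑ k ∈ (Fintype.piFinset fun _ : Fin d => Finset.Icc (-(N : ℤ)) (N : ℤ)).filter
      (fun k => ∑ i, (k i) ^ 2 ≤ (N : ℤ) ^ 2),
    Complex.exp (2 * (π : ℂ) * Complex.I * (∑ i, (k i : ℝ) * x i))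

/-- **Growth bound for the spherical Dirichlet kernel.** For `d ≥ 1` and
`x ∈ ℝ^d \ ℤ^d`, there is `C(x)` with `|D_N^d(x)| ≤ C(x) N^{d-1}` for all `N ≥ 1`. -/
theorem sphericalDirichlet_bound (d : ℕ) (hd : 1 ≤ d) (x : Fin d → ℝ)
    (hx : ¬ ∀ i, ∃ n : ℤ, x i = n) :
    ∃ C : ℝ, ∀ N : ℕ, 1 ≤ N →
      ‖sphericalDirichlet d N x‖ ≤ C * (N : ℝ) ^ (d - 1) := by
  obtain ⟨i₀, hi₀⟩ := not_forall.mp hx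
  set z : ℂ := Complex.exp (2 * (π:ℂ) * Complex.I * (x i₀ : ℝ)) with hzdef
  have hznorm : ‖z‖ = 1 := by
    rw [hzdef, Complex.norm_exp]
    have : (2 * (π:ℂ) * Complex.I * (x i₀ : ℝ)).re = 0 := by simp
    rw [this, Real.exp_zero]
  have hpii : (2 * (π:ℂ) * Complex.I) ≠ 0 := by
    simp [Complex.I_ne_zero, Real.pi_ne_zero]
  have hz1 : z ≠ 1 := by
    intro h
    rw [hzdef, Complex.exp_eq_one_iff] at h
    obtain ⟨n, hn⟩ := h
    apply hi₀
    refine ⟨n, ?_⟩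
    have hcc : ((x i₀ : ℝ) : ℂ) = (n : ℂ) := by
      apply mul_left_cancel₀ hpii
      rw [hn]; ring
    exact_mod_cast hcc
  have h1z : (0:ℝ) < ‖1 - z‖ := by
    rw [norm_pos_iff]; intro h; exact hz1 (sub_eq_zero.mp h).symm
  refine ⟨2 / ‖1 - z‖ * 3 ^ (d - 1), fun N hN => ?_⟩
  set f : (Fin d → ℤ) → ℂ :=
    fun k => Complex.exp (2 * (π : ℂ) * Complex.I * (∑ i, (k i : ℝ) * x i)) with hf
  set F : Finset (Fin d → ℤ) :=
    (Fintype.piFinset fun _ : Fin d => Finset.Icc (-(N : ℤ)) (N : ℤ)).filter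
      (fun k => ∑ i, (k i) ^ 2 ≤ (N : ℤ) ^ 2) with hF
  set t : Finset (Fin d → ℤ) :=
    Fintype.piFinset (fun i => if i = i₀ then ({0} : Finset ℤ) else Finset.Icc (-(N:ℤ)) N)
    with ht
  have hmaps : ∀ k ∈ F, Function.update k i₀ 0 ∈ t := by
    intro k hk
    rw [hF, Finset.mem_filter, Fintype.mem_piFinset] at hk
    rw [ht, Fintype.mem_piFinset]
    intro i
    by_cases hi : i = i₀
    · subst hi; simp
    · simp [hi, Function.update_of_ne hi]
      have := hk.1 i; simpa using this
  have hsplit : sphericalDirichlet d N x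
      = ∑ y ∈ t, ∑ k ∈ F.filter (fun k => Function.update k i₀ 0 = y), f k :=
    (Finset.sum_fiberwise_of_maps_to hmaps f).symm
  -- per-fiber bound
  have fiber_bound : ∀ y ∈ t,
      ‖∑ k ∈ F.filter (fun k => Function.update k i₀ 0 = y), f k‖ ≤ 2 / ‖1 - z‖ := by
    intro y hy
    rw [ht, Fintype.mem_piFinset] at hy
    have hy0 : y i₀ = 0 := by have := hy i₀; simpa using this
    have hyIcc : ∀ i, i ≠ i₀ → y i ∈ Finset.Icc (-(N:ℤ)) N := by
      intro i hi; have := hy i; simpa [hi] using this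
    set c : ℤ := (N:ℤ)^2 - ∑ i, (y i)^2 with hc
    set S : Finset ℤ := (Finset.Icc (-(N:ℤ)) N).filter
      (fun m => m^2 + ∑ i, (y i)^2 ≤ (N:ℤ)^2) with hS
    -- the fiber equals the image of S
    have sum_update_sq : ∀ m : ℤ, ∑ i, (Function.update y i₀ m i)^2 = m^2 + ∑ i, (y i)^2 := by
      intro m
      rw [← Finset.add_sum_erase _ _ (Finset.mem_univ i₀),
          ← Finset.add_sum_erase _ (fun i => (y i)^2) (Finset.mem_univ i₀)]
      have he : ∑ i ∈ Finset.univ.erase i₀, (Function.update y i₀ m i)^2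
          = ∑ i ∈ Finset.univ.erase i₀, (y i)^2 :=
        Finset.sum_congr rfl fun i hi => by
          rw [Function.update_of_ne (Finset.ne_of_mem_erase hi)]
      rw [he, Function.update_self, hy0]
      ring
    have sum_update_mul : ∀ m : ℤ, ∑ i, ((Function.update y i₀ m i : ℝ)) * x i
        = (m:ℝ) * x i₀ + ∑ i, (y i : ℝ) * x i := by
      intro m
      rw [← Finset.add_sum_erase _ _ (Finset.mem_univ i₀),
          ← Finset.add_sum_erase _ (fun i => (y i : ℝ) * x i) (Finset.mem_univ i₀)]
      have he : ∑ i ∈ Finset.univ.erase i₀, ((Function.update y i₀ m i : ℝ)) * x i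
          = ∑ i ∈ Finset.univ.erase i₀, (y i : ℝ) * x i :=
        Finset.sum_congr rfl fun i hi => by
          rw [Function.update_of_ne (Finset.ne_of_mem_erase hi)]
      rw [he, Function.update_self, hy0]
      push_cast
      ring
    have hfiber : F.filter (fun k => Function.update k i₀ 0 = y)
        = S.image (fun m => Function.update y i₀ m) := by
      ext k
      simp only [hF, hS, Finset.mem_filter, Finset.mem_image, Fintype.mem_piFinset]
      constructor
      · rintro ⟨⟨hmem, hsum⟩, hupd⟩
        have hkeq : ∀ i, i ≠ i₀ → k i = y i := by
          intro i hi
          rw [← hupd, Function.update_of_ne hi]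
        have hkup : k = Function.update y i₀ (k i₀) := by
          funext i
          by_cases hi : i = i₀
          · subst hi; simp
          · rw [Function.update_of_ne hi, hkeq i hi]
        refine ⟨k i₀, ⟨hmem i₀, ?_⟩, hkup.symm⟩
        rw [← sum_update_sq, ← hkup]; exact hsum
      · rintro ⟨m, ⟨hmIcc, hmsum⟩, rfl⟩
        refine ⟨⟨?_, ?_⟩, ?_⟩
        · intro i
          by_cases hi : i = i₀
          · subst hi; simpa using hmIcc
          · rw [Function.update_of_ne hi]; exact hyIcc i hi
        · rw [sum_update_sq]; exact hmsum
        · funext i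
          by_cases hi : i = i₀
          · subst hi; simp [hy0]
          · simp [Function.update_of_ne hi]
    have hinj : ∀ a ∈ S, ∀ b ∈ S,
        Function.update y i₀ a = Function.update y i₀ b → a = b := by
      intro a _ b _ h
      have := congrFun h i₀; simpa using this
    rw [hfiber, Finset.sum_image hinj]
    -- f (update y i₀ m) = z^m * w
    set w : ℂ := Complex.exp (2 * (π : ℂ) * Complex.I * (∑ i, (y i : ℝ) * x i)) with hw
    have hfval : ∀ m : ℤ, f (Function.update y i₀ m) = z ^ m * w := by
      intro m
      rw [hf]
      simp only
      rw [sum_update_mul m]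
      rw [hw, hzdef, ← Complex.exp_int_mul, ← Complex.exp_add]
      congr 1
      push_cast
      ring
    have hwnorm : ‖w‖ = 1 := by
      rw [hw, Complex.norm_exp]
      have : (2 * (π:ℂ) * Complex.I * ((∑ i, (y i : ℝ) * x i : ℝ):ℂ)).re = 0 := by simp
      rw [this, Real.exp_zero]
    simp only [hfval]
    rw [← Finset.sum_mul, norm_mul, hwnorm, mul_one]
    -- S is an interval (or empty)
    rcases lt_or_ge c 0 with hcneg | hcpos
    · have : S = ∅ := by
        rw [hS, Finset.filter_eq_empty_iff]
        intro m _
        have : 0 ≤ m^2 := sq_nonneg m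
        omega
      rw [this]; simp; positivity
    · have hSeq : S = Finset.Icc (max (-(N:ℤ)) (-(Nat.sqrt c.toNat : ℤ)))
          (min (N:ℤ) (Nat.sqrt c.toNat : ℤ)) := by
        ext m
        rw [hS, Finset.mem_filter, Finset.mem_Icc, Finset.mem_Icc]
        have h1 : m^2 + ∑ i, (y i)^2 ≤ (N:ℤ)^2 ↔ m^2 ≤ c := by rw [hc]; omega
        rw [h1, sq_le_iff_abs c m hcpos, abs_le]
        omega
      rw [hSeq]
      exact geom_bound z hznorm hz1 _ _
  -- put together
  have hcard : (t.card : ℝ) ≤ 3 ^ (d-1) * (N:ℝ)^(d-1) := by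
    have h1 : t.card = (2*N+1)^(d-1) := by
      rw [ht, Fintype.card_piFinset]
      have h2 : ∀ i : Fin d, (if i = i₀ then ({0} : Finset ℤ) else Finset.Icc (-(N:ℤ)) N).card
          = if i = i₀ then 1 else 2*N+1 := by
        intro i
        by_cases hi : i = i₀
        · simp [hi]
        · simp only [hi, if_false]
          rw [Int.card_Icc]
          omega
      simp only [h2]
      rw [← Finset.mul_prod_erase _ _ (Finset.mem_univ i₀)]
      simp only [if_pos rfl, one_mul]
      rw [Finset.prod_congr rfl (fun i hi => if_neg (Finset.ne_of_mem_erase hi)),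
          Finset.prod_const, Finset.card_erase_of_mem (Finset.mem_univ _),
          Finset.card_univ, Fintype.card_fin]
      simp
    rw [h1]
    push_cast
    have hN1 : (1:ℝ) ≤ (N:ℝ) := Nat.one_le_cast.mpr hN
    calc ((2*(N:ℝ)+1))^(d-1) ≤ (3*(N:ℝ))^(d-1) :=
          pow_le_pow_left₀ (by positivity) (by linarith) _
      _ = 3^(d-1)*(N:ℝ)^(d-1) := mul_pow _ _ _
  calc ‖sphericalDirichlet d N x‖
      = ‖∑ y ∈ t, ∑ k ∈ F.filter (fun k => Function.update k i₀ 0 = y), f k‖ := by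
        rw [hsplit]
    _ ≤ ∑ y ∈ t, ‖∑ k ∈ F.filter (fun k => Function.update k i₀ 0 = y), f k‖ :=
        norm_sum_le _ _
    _ ≤ ∑ _y ∈ t, 2/‖1-z‖ := Finset.sum_le_sum fiber_bound
    _ = t.card * (2/‖1-z‖) := by rw [Finset.sum_const, nsmul_eq_mul]
    _ ≤ (3^(d-1)*(N:ℝ)^(d-1)) * (2/‖1-z‖) :=
        mul_le_mul_of_nonneg_right hcard (by positivity)
    _ = 2/‖1-z‖ * 3^(d-1) * (N:ℝ)^(d-1) := by ring
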